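/- Let h, g, P, Q be positive reals, γ(t) = g²(Q − t²)/((h√P − g·t)² + 1), and t₁ = [(h²P + g²Q + 1) − √((h²P + g²Q + 1)² − 4h²g²PQ)]/(2hg√P). Then t₁ is a global maximizer of γ over [0, ∞): for all t ≥ 0, γ(t) ≤ γ(t₁). -/
import Mathlib


set_option maxHeartbeats 1000000 in
theorem stmt6 (h g P Q : ℝ) (hh : 0 < h) (hg : 0 < g) (hP : 0 < P) (hQ : 0 < Q)
    (γ : ℝ → ℝ)
    (hγ : γ = fun t : ℝ => g ^ 2 * (Q - t ^ 2) / ((h * Real.sqrt P - g * t) ^ 2 + 1))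
    (t₁ : ℝ)
    (ht₁ : t₁ = ((h ^ 2 * P + g ^ 2 * Q + 1) -
        Real.sqrt ((h ^ 2 * P + g ^ 2 * Q + 1) ^ 2 - 4 * h ^ 2 * g ^ 2 * P * Q)) /
        (2 * h * g * Real.sqrt P)) :
    ∀ t : ℝ, 0 ≤ t → γ t ≤ γ t₁ := by
  intro t ht
  set a : ℝ := h * Real.sqrt P with ha_def
  have hsP : 0 < Real.sqrt P := Real.sqrt_pos.mpr hP
  have ha : 0 < a := mul_pos hh hsP
  have ha2 : a ^ 2 = h ^ 2 * P := by
    rw [ha_def, mul_pow, Real.sq_sqrt hP.le]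
  set B : ℝ := g ^ 2 * Q with hB_def
  set M : ℝ := h ^ 2 * P + g ^ 2 * Q + 1 with hM_def
  set D : ℝ := M ^ 2 - 4 * h ^ 2 * g ^ 2 * P * Q with hD_def
  have hD : 0 ≤ D := by
    rw [hD_def, hM_def]
    nlinarith [sq_nonneg (h ^ 2 * P - g ^ 2 * Q), mul_pos hP hQ, sq_nonneg (h * g)]
  set s : ℝ := Real.sqrt D with hs_def
  have hs : 0 ≤ s := Real.sqrt_nonneg _
  have hs2 : s ^ 2 = M ^ 2 - 4 * a ^ 2 * B := by
    rw [hs_def, Real.sq_sqrt hD, hD_def, ha2]; ring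
  set u₁ : ℝ := g * t₁ with hu₁_def
  have e1 : 2 * a * u₁ = M - s := by
    rw [hu₁_def, ht₁]
    field_simp [ha_def]
    ring
  have hs_eq : s = M - 2 * a * u₁ := by linarith
  have hE : a * u₁ ^ 2 - M * u₁ + a * B = 0 := by
    nlinarith [hs2, hs_eq, sq_nonneg s, ha]
  set u : ℝ := g * t with hu_def
  clear_value a B M D s u₁ u
  have hid : (B - u₁ ^ 2) * ((a - u) ^ 2 + 1) - (B - u ^ 2) * ((a - u₁) ^ 2 + 1)
      = s * (u - u₁) ^ 2 := by
    linear_combination (-2 * (u - u₁)) * hE - (u - u₁) ^ 2 * hs_eq + (u ^ 2 - u₁ ^ 2) * ha2 + (u ^ 2 - u₁ ^ 2) * hB_def - (u ^ 2 - u₁ ^ 2) * hM_def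
  have hDt : 0 < (a - u) ^ 2 + 1 := by positivity
  have hDt₁ : 0 < (a - u₁) ^ 2 + 1 := by positivity
  rw [hγ]
  show g ^ 2 * (Q - t ^ 2) / ((a - g * t) ^ 2 + 1) ≤
      g ^ 2 * (Q - t₁ ^ 2) / ((a - g * t₁) ^ 2 + 1)
  rw [show g ^ 2 * (Q - t ^ 2) = B - u ^ 2 from by rw [hB_def, hu_def]; ring,
      show g ^ 2 * (Q - t₁ ^ 2) = B - u₁ ^ 2 from by rw [hB_def, hu₁_def]; ring,
      ← hu_def, ← hu₁_def, div_le_div_iff₀ hDt hDt₁]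
  nlinarith [mul_nonneg hs (sq_nonneg (u - u₁)), hid]
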